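/- Lipschitz bound for tensor-power expectation values: let d, k ≥ 1, let u, v ∈ ℂ^d be unit vectors (with respect to the standard Hermitian inner product), and let A be a complex matrix indexed by the function type (Fin k → Fin d) that is positive semidefinite with I − A positive semidefinite. Define the k-fold tensor powers U, V : (Fin k → Fin d) → ℂ by U(f) = Π_{i} u(f(i)) and V(f) = Π_{i} v(f(i)). Then |Σ_{f,g} conj(U(f))·A(f,g)·U(g) − Σ_{f,g} conj(V(f))·A(f,g)·V(g)| ≤ k·‖u − v‖₂. -/

import Mathlib

open scoped ComplexOrder

section Aux
open Matrix
open scoped MatrixOrder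
set_option linter.unusedSectionVars false
variable {n : Type*} [Fintype n] [DecidableEq n]

noncomputable def EN (x : n → ℂ) : ℝ := ‖(WithLp.equiv 2 (n → ℂ)).symm x‖

noncomputable def Matrix.PosSemidef.sqrt {A : Matrix n n ℂ} (_hA : A.PosSemidef) :
    Matrix n n ℂ := CFC.sqrt A

lemma Matrix.PosSemidef.posSemidef_sqrt {A : Matrix n n ℂ} (hA : A.PosSemidef) :
    hA.sqrt.PosSemidef :=
  Matrix.nonneg_iff_posSemidef.mp (CFC.sqrt_nonneg A)

lemma Matrix.PosSemidef.sqrt_mul_self {A : Matrix n n ℂ} (hA : A.PosSemidef) :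
    hA.sqrt * hA.sqrt = A :=
  CFC.sqrt_mul_sqrt_self A (Matrix.nonneg_iff_posSemidef.mpr hA)

lemma EN_nonneg (x : n → ℂ) : 0 ≤ EN x := norm_nonneg _

lemma EN_add_le (p q : n → ℂ) : EN (p + q) ≤ EN p + EN q := norm_add_le
  ((WithLp.equiv 2 (n → ℂ)).symm p) ((WithLp.equiv 2 (n → ℂ)).symm q)

lemma EN_cs (p q : n → ℂ) : ‖dotProduct (star p) q‖ ≤ EN p * EN q := by
  rw [show dotProduct (star p) q = inner ℂ (WithLp.toLp 2 p) (WithLp.toLp 2 q) by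
    rw [EuclideanSpace.inner_toLp_toLp, dotProduct_comm]]
  exact norm_inner_le_norm _ _

lemma EN_sq (p : n → ℂ) : (dotProduct (star p) p) = (EN p : ℂ)^2 := by
  rw [show dotProduct (star p) p = inner ℂ (WithLp.toLp 2 p) (WithLp.toLp 2 p) by
    rw [EuclideanSpace.inner_toLp_toLp, dotProduct_comm], inner_self_eq_norm_sq_to_K]
  rfl

lemma sqrt_form (A : Matrix n n ℂ) (hA : A.PosSemidef) (x y : n → ℂ) :
    dotProduct (star x) (A.mulVec y)
      = dotProduct (star (hA.sqrt.mulVec x)) (hA.sqrt.mulVec y) := by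
  rw [Matrix.star_mulVec, hA.posSemidef_sqrt.1, ← dotProduct_mulVec,
    Matrix.mulVec_mulVec, hA.sqrt_mul_self]

lemma split_quad (A : Matrix n n ℂ) (x y : n → ℂ) :
    dotProduct (star x) (((1 : Matrix n n ℂ) - A).mulVec y)
      = dotProduct (star x) y - dotProduct (star x) (A.mulVec y) := by
  rw [Matrix.sub_mulVec, Matrix.one_mulVec, dotProduct_sub]

lemma amgm_bound (a b c d x y T : ℝ) (hT : 0 ≤ T)
    (h1 : T ≤ a * b) (h2 : T ≤ c * d) (ea : a ^ 2 + c ^ 2 = x ^ 2) (eb : b ^ 2 + d ^ 2 = y ^ 2)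
    (hx : 0 ≤ x) (hy : 0 ≤ y) (ha : 0 ≤ a) (hb : 0 ≤ b) (hc : 0 ≤ c) (hd : 0 ≤ d) :
    T ≤ x * y / 2 := by
  have hsq : T ^ 2 ≤ (a * c) * (b * d) := by nlinarith [mul_le_mul h1 h2 hT (mul_nonneg ha hb)]
  have hac : a * c ≤ x ^ 2 / 2 := by nlinarith [sq_nonneg (a - c)]
  have hbd : b * d ≤ y ^ 2 / 2 := by nlinarith [sq_nonneg (b - d)]
  have h4 : T ^ 2 ≤ (x ^ 2 / 2) * (y ^ 2 / 2) :=
    hsq.trans (mul_le_mul hac hbd (mul_nonneg hb hd) (by positivity))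
  nlinarith [h4, mul_nonneg hx hy]

lemma offdiag_bound (A : Matrix n n ℂ) (hA : A.PosSemidef)
    (hA' : ((1 : Matrix n n ℂ) - A).PosSemidef) (w z : n → ℂ)
    (hwz : dotProduct (star w) z = 0) :
    ‖dotProduct (star w) (A.mulVec z)‖ ≤ EN w * EN z / 2 := by
  set B := hA.sqrt with hB
  set C := hA'.sqrt with hC
  set t := dotProduct (star w) (A.mulVec z) with ht
  have h1 : t = dotProduct (star (B.mulVec w)) (B.mulVec z) := sqrt_form A hA w z
  have h2 : dotProduct (star (C.mulVec w)) (C.mulVec z) = -t := by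
    rw [← sqrt_form _ hA' w z, split_quad, hwz, zero_sub]
  have ew : EN (B.mulVec w) ^ 2 + EN (C.mulVec w) ^ 2 = EN w ^ 2 := by
    have : (EN (B.mulVec w) : ℂ) ^ 2 + (EN (C.mulVec w) : ℂ) ^ 2 = (EN w : ℂ) ^ 2 := by
      rw [← EN_sq, ← EN_sq, ← EN_sq, ← sqrt_form A hA w w, ← sqrt_form _ hA' w w, split_quad]
      ring
    exact_mod_cast this
  have ez : EN (B.mulVec z) ^ 2 + EN (C.mulVec z) ^ 2 = EN z ^ 2 := by
    have : (EN (B.mulVec z) : ℂ) ^ 2 + (EN (C.mulVec z) : ℂ) ^ 2 = (EN z : ℂ) ^ 2 := by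
      rw [← EN_sq, ← EN_sq, ← EN_sq, ← sqrt_form A hA z z, ← sqrt_form _ hA' z z, split_quad]
      ring
    exact_mod_cast this
  have hb1 : ‖t‖ ≤ EN (B.mulVec w) * EN (B.mulVec z) := by rw [h1]; exact EN_cs _ _
  have hb2 : ‖t‖ ≤ EN (C.mulVec w) * EN (C.mulVec z) := by
    rw [← norm_neg, ← h2]; exact EN_cs _ _
  exact amgm_bound _ _ _ _ _ _ _ (norm_nonneg t) hb1 hb2 ew ez (EN_nonneg w) (EN_nonneg z)
    (EN_nonneg _) (EN_nonneg _) (EN_nonneg _) (EN_nonneg _)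

lemma herm_conj_quad (A : Matrix n n ℂ) (hH : A.IsHermitian) (p q : n → ℂ) :
    star (dotProduct (star p) (A.mulVec q)) = dotProduct (star q) (A.mulVec p) := by
  rw [Matrix.star_dotProduct, star_star, Matrix.star_mulVec, hH.eq,
    ← dotProduct_mulVec]

lemma quad_diff (A : Matrix n n ℂ) (hA : A.PosSemidef)
    (hA' : ((1 : Matrix n n ℂ) - A).PosSemidef) (x y : n → ℂ)
    (hx : dotProduct (star x) x = 1) (hy : dotProduct (star y) y = 1) :
    ‖dotProduct (star x) (A.mulVec x) - dotProduct (star y) (A.mulVec y)‖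
      ≤ EN (x - y) := by
  set t := dotProduct (star x) y with htdef
  set c : ℂ := if t = 0 then 1 else (‖t‖ : ℂ) / t with hcdef
  have hct : c * t = (‖t‖ : ℂ) := by
    by_cases h : t = 0
    · simp [hcdef, h]
    · rw [hcdef, if_neg h, div_mul_cancel₀ _ h]
  have hcc : star c * c = 1 := by
    by_cases h : t = 0
    · simp [hcdef, h]
    · rw [RCLike.star_def, RCLike.conj_mul, hcdef, if_neg h]
      have : ‖(‖t‖ : ℂ) / t‖ = 1 := by
        rw [norm_div, Complex.norm_real, norm_norm, div_self (norm_ne_zero_iff.2 h)]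
      rw [this]; norm_num
  set y' := c • y with hy'def
  have hsy' : star y' = star c • star y := by
    funext i; simp [hy'def, mul_comm]
  have hy'y' : dotProduct (star y') y' = 1 := by
    rw [hsy', hy'def, smul_dotProduct, dotProduct_smul, hy, smul_eq_mul,
      smul_eq_mul, mul_one, hcc]
  have hxy' : dotProduct (star x) y' = (‖t‖ : ℂ) := by
    rw [hy'def, dotProduct_smul, smul_eq_mul, ← htdef, hct]
  have hy'x : dotProduct (star y') x = (‖t‖ : ℂ) := by
    rw [Matrix.star_dotProduct, hxy', RCLike.star_def, Complex.conj_ofReal]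
  have hbb : dotProduct (star y') (A.mulVec y')
      = dotProduct (star y) (A.mulVec y) := by
    rw [hsy', hy'def, Matrix.mulVec_smul, smul_dotProduct, dotProduct_smul,
      smul_eq_mul, smul_eq_mul, ← mul_assoc, hcc, one_mul]
  set w := x + y' with hwdef
  set z := x - y' with hzdef
  have hwz : dotProduct (star w) z = 0 := by
    rw [hwdef, hzdef, star_add, add_dotProduct, dotProduct_sub,
      dotProduct_sub, hx, hy'y', hxy', hy'x]
    ring
  set S := dotProduct (star w) (A.mulVec z) with hSdef
  set D := dotProduct (star x) (A.mulVec x) - dotProduct (star y) (A.mulVec y)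
    with hDdef
  have hS : S + star S = 2 * D := by
    have h1 : star S = dotProduct (star z) (A.mulVec w) := herm_conj_quad A hA.1 w z
    rw [h1, hSdef, hDdef, ← hbb, hwdef, hzdef, star_add, star_sub, Matrix.mulVec_add,
      Matrix.mulVec_sub, add_dotProduct, sub_dotProduct,
      dotProduct_sub, dotProduct_sub, dotProduct_add,
      dotProduct_add]
    ring
  have hDS : ‖D‖ ≤ ‖S‖ := by
    have h2 : ‖2 * D‖ ≤ ‖S‖ + ‖star S‖ := hS ▸ norm_add_le _ _
    rw [norm_star, norm_mul] at h2
    simp only [Complex.norm_ofNat] at h2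
    linarith
  have hENx : EN x = 1 := by
    have h3 : (EN x : ℂ) ^ 2 = 1 := by rw [← EN_sq, hx]
    have h4 : (EN x : ℝ) ^ 2 = 1 := by exact_mod_cast h3
    nlinarith [EN_nonneg x]
  have hENy' : EN y' = 1 := by
    have h3 : (EN y' : ℂ) ^ 2 = 1 := by rw [← EN_sq, hy'y']
    have h4 : (EN y' : ℝ) ^ 2 = 1 := by exact_mod_cast h3
    nlinarith [EN_nonneg y']
  have hw2 : EN w ≤ 2 := by
    calc EN w ≤ EN x + EN y' := EN_add_le x y'
      _ = 2 := by rw [hENx, hENy']; norm_num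
  have hz2 : EN z ^ 2 = 2 - 2 * ‖t‖ := by
    have h3 : (EN z : ℂ) ^ 2 = ((2 - 2 * ‖t‖ : ℝ) : ℂ) := by
      rw [← EN_sq, hzdef, star_sub, sub_dotProduct, dotProduct_sub,
        dotProduct_sub, hx, hy'y', hxy', hy'x]
      push_cast; ring
    exact_mod_cast h3
  have hxy2 : EN (x - y) ^ 2 = 2 - 2 * t.re := by
    have hyx : dotProduct (star y) x = star t := by
      rw [htdef, Matrix.star_dotProduct]
    have h3 : (EN (x - y) : ℂ) ^ 2 = ((2 - 2 * t.re : ℝ) : ℂ) := by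
      rw [← EN_sq, star_sub, sub_dotProduct, dotProduct_sub,
        dotProduct_sub, hx, hy, ← htdef, hyx]
      have : t + star t = ((2 * t.re : ℝ) : ℂ) := by
        rw [RCLike.star_def]; exact_mod_cast Complex.add_conj t
      push_cast at this ⊢
      linear_combination -this
    exact_mod_cast h3
  have hzle : EN z ≤ EN (x - y) := by
    have h5 : EN z ^ 2 ≤ EN (x - y) ^ 2 := by
      rw [hz2, hxy2]
      have := Complex.re_le_norm t
      linarith
    nlinarith [EN_nonneg z, EN_nonneg (x - y)]
  calc ‖D‖ ≤ ‖S‖ := hDS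
    _ ≤ EN w * EN z / 2 := offdiag_bound A hA hA' w z hwz
    _ ≤ 2 * EN (x - y) / 2 := by
        have := mul_le_mul hw2 hzle (EN_nonneg z) (by norm_num)
        linarith
    _ = EN (x - y) := by ring

lemma dot_pow (k d : ℕ) (p q : Fin d → ℂ) :
    dotProduct (star (fun f : Fin k → Fin d => ∏ i, p (f i)))
      (fun f : Fin k → Fin d => ∏ i, q (f i))
      = (dotProduct (star p) q) ^ k := by
  calc dotProduct (star (fun f : Fin k → Fin d => ∏ i, p (f i)))
        (fun f : Fin k → Fin d => ∏ i, q (f i))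
      = ∑ f : Fin k → Fin d, ∏ i, (star (p (f i)) * q (f i)) := by
        simp [dotProduct, Finset.prod_mul_distrib]
    _ = ∏ _i : Fin k, ∑ j, star (p j) * q j := by
        rw [Finset.prod_univ_sum]; rw [Fintype.piFinset_univ]
    _ = (dotProduct (star p) q) ^ k := by
        simp [dotProduct, Finset.prod_const, Finset.card_univ]

lemma norm_one_sub_sq (a : ℂ) : ‖1 - a‖ ^ 2 = 1 - 2 * a.re + ‖a‖ ^ 2 := by
  simp only [Complex.sq_norm, Complex.normSq_apply,
    Complex.sub_re, Complex.sub_im, Complex.one_re, Complex.one_im]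
  ring

lemma chord_tri (a b : ℂ) (ha : ‖a‖ ≤ 1) (hb : ‖b‖ ≤ 1) :
    Real.sqrt (2 - 2 * (a * b).re)
      ≤ Real.sqrt (2 - 2 * a.re) + Real.sqrt (2 - 2 * b.re) := by
  have hra : a.re ≤ 1 := le_trans (Complex.re_le_norm a) ha
  have hrb : b.re ≤ 1 := le_trans (Complex.re_le_norm b) hb
  have h1a : ‖1 - a‖ ≤ Real.sqrt (2 - 2 * a.re) := by
    rw [show ‖1 - a‖ = Real.sqrt (‖1 - a‖ ^ 2) from (Real.sqrt_sq (norm_nonneg _)).symm]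
    apply Real.sqrt_le_sqrt
    rw [norm_one_sub_sq]
    nlinarith [norm_nonneg a]
  have h1b : ‖1 - b‖ ≤ Real.sqrt (2 - 2 * b.re) := by
    rw [show ‖1 - b‖ = Real.sqrt (‖1 - b‖ ^ 2) from (Real.sqrt_sq (norm_nonneg _)).symm]
    apply Real.sqrt_le_sqrt
    rw [norm_one_sub_sq]
    nlinarith [norm_nonneg b]
  have hkey : 2 - 2 * (a * b).re - (2 - 2 * a.re) - (2 - 2 * b.re)
      ≤ 2 * (‖1 - a‖ * ‖1 - b‖) := by
    have h2 : -((1 - a) * (1 - b)).re ≤ ‖(1 - a) * (1 - b)‖ := by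
      have := Complex.re_le_norm (-((1 - a) * (1 - b)))
      rw [norm_neg, Complex.neg_re] at this
      exact this
    rw [norm_mul] at h2
    have h3 : ((1 - a) * (1 - b)).re = 1 - a.re - b.re + (a * b).re := by
      simp [Complex.sub_re, Complex.mul_re, Complex.sub_im]
      ring
    nlinarith
  have hs : Real.sqrt (2 - 2 * (a * b).re) ^ 2 ≤
      (Real.sqrt (2 - 2 * a.re) + Real.sqrt (2 - 2 * b.re)) ^ 2 := by
    have hrab : (a * b).re ≤ 1 := by
      have := Complex.re_le_norm (a * b)
      rw [norm_mul] at this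
      nlinarith [norm_nonneg a, norm_nonneg b]
    rw [Real.sq_sqrt (by linarith)]
    have e1 : Real.sqrt (2 - 2 * a.re) ^ 2 = 2 - 2 * a.re := Real.sq_sqrt (by linarith)
    have e2 : Real.sqrt (2 - 2 * b.re) ^ 2 = 2 - 2 * b.re := Real.sq_sqrt (by linarith)
    have hm : ‖1 - a‖ * ‖1 - b‖ ≤ Real.sqrt (2 - 2 * a.re) * Real.sqrt (2 - 2 * b.re) :=
      mul_le_mul h1a h1b (norm_nonneg _) (Real.sqrt_nonneg _)
    nlinarith [hkey, hm]
  have h4 := Real.sqrt_le_sqrt hs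
  rwa [Real.sqrt_sq (Real.sqrt_nonneg _), Real.sqrt_sq (by positivity)] at h4

lemma chord_pow (s : ℂ) (hs : ‖s‖ ≤ 1) (k : ℕ) :
    Real.sqrt (2 - 2 * (s ^ k).re) ≤ k * Real.sqrt (2 - 2 * s.re) := by
  induction k with
  | zero => simp
  | succ m ih =>
      have hsm : ‖s ^ m‖ ≤ 1 := by
        rw [norm_pow]; exact pow_le_one₀ (norm_nonneg s) hs
      calc Real.sqrt (2 - 2 * (s ^ (m + 1)).re)
          = Real.sqrt (2 - 2 * (s ^ m * s).re) := by rw [pow_succ]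
        _ ≤ Real.sqrt (2 - 2 * (s ^ m).re) + Real.sqrt (2 - 2 * s.re) := chord_tri _ _ hsm hs
        _ ≤ m * Real.sqrt (2 - 2 * s.re) + Real.sqrt (2 - 2 * s.re) := by linarith
        _ = (m + 1 : ℕ) * Real.sqrt (2 - 2 * s.re) := by push_cast; ring

lemma sum_form (A : Matrix n n ℂ) (x : n → ℂ) :
    ∑ f, ∑ g, star (x f) * A f g * x g = dotProduct (star x) (A.mulVec x) := by
  simp [dotProduct, Matrix.mulVec, Finset.mul_sum, mul_assoc]

end Aux

/-- Lipschitz bound for tensor-power expectation values: for unit vectors `u, v ∈ ℂ^d`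
and a matrix `0 ⪯ A ⪯ I` on `(ℂ^d)^{⊗k}` (indexed by `Fin k → Fin d`), the expectation
values of `A` on the `k`-fold tensor powers of `u` and `v` differ by at most
`k ‖u - v‖₂`. -/
theorem tensor_power_expectation_lipschitz
    (d k : ℕ) (hd : 1 ≤ d) (hk : 1 ≤ k)
    (u v : EuclideanSpace ℂ (Fin d)) (hu : ‖u‖ = 1) (hv : ‖v‖ = 1)
    (A : Matrix (Fin k → Fin d) (Fin k → Fin d) ℂ)
    (hA : A.PosSemidef) (hA' : ((1 : Matrix (Fin k → Fin d) (Fin k → Fin d) ℂ) - A).PosSemidef) :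
    ‖(∑ f : Fin k → Fin d, ∑ g : Fin k → Fin d,
          star (∏ i, u (f i)) * A f g * (∏ i, u (g i)))
        - (∑ f : Fin k → Fin d, ∑ g : Fin k → Fin d,
          star (∏ i, v (f i)) * A f g * (∏ i, v (g i)))‖
      ≤ (k : ℝ) * ‖u - v‖ := by
  set u' : Fin d → ℂ := WithLp.ofLp u with hu'def
  set v' : Fin d → ℂ := WithLp.ofLp v with hv'def
  set X : (Fin k → Fin d) → ℂ := fun f => ∏ i, u' (f i) with hXdef
  set Y : (Fin k → Fin d) → ℂ := fun f => ∏ i, v' (f i) with hYdef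
  have hENu : EN u' = ‖u‖ := rfl
  have hENv : EN v' = ‖v‖ := rfl
  have hu1 : dotProduct (star u') u' = 1 := by
    rw [EN_sq, hENu, hu]; norm_num
  have hv1 : dotProduct (star v') v' = 1 := by
    rw [EN_sq, hENv, hv]; norm_num
  set s : ℂ := dotProduct (star u') v' with hsdef
  have hs1 : ‖s‖ ≤ 1 := by
    have := EN_cs u' v'
    rw [hENu, hENv, hu, hv] at this
    simpa using this
  have e1 : (∑ f : Fin k → Fin d, ∑ g : Fin k → Fin d,
        star (∏ i, u (f i)) * A f g * (∏ i, u (g i)))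
      = dotProduct (star X) (A.mulVec X) := sum_form A X
  have e2 : (∑ f : Fin k → Fin d, ∑ g : Fin k → Fin d,
        star (∏ i, v (f i)) * A f g * (∏ i, v (g i)))
      = dotProduct (star Y) (A.mulVec Y) := sum_form A Y
  rw [e1, e2]
  have hX1 : dotProduct (star X) X = 1 := by
    rw [hXdef, dot_pow, hu1, one_pow]
  have hY1 : dotProduct (star Y) Y = 1 := by
    rw [hYdef, dot_pow, hv1, one_pow]
  have key := quad_diff A hA hA' X Y hX1 hY1
  refine key.trans ?_
  -- compute EN (X - Y)
  have hXY : dotProduct (star X) Y = s ^ k := by rw [hXdef, hYdef, dot_pow, hsdef]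
  have hYX : dotProduct (star Y) X = star (s ^ k) := by
    rw [hYdef, hXdef, dot_pow, star_pow]
    congr 1
    rw [Matrix.star_dotProduct]
  have hEXY2 : EN (X - Y) ^ 2 = 2 - 2 * (s ^ k).re := by
    have h3 : (EN (X - Y) : ℂ) ^ 2 = ((2 - 2 * (s ^ k).re : ℝ) : ℂ) := by
      rw [← EN_sq, star_sub, sub_dotProduct, dotProduct_sub,
        dotProduct_sub, hX1, hY1, hXY, hYX]
      have : s ^ k + star (s ^ k) = ((2 * (s ^ k).re : ℝ) : ℂ) := by
        rw [RCLike.star_def]; exact_mod_cast Complex.add_conj (s ^ k)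
      push_cast at this ⊢
      linear_combination -this
    exact_mod_cast h3
  have huv2 : ‖u - v‖ ^ 2 = 2 - 2 * s.re := by
    have hENuv : EN (u' - v') = ‖u - v‖ := rfl
    have hvu : dotProduct (star v') u' = star s := by
      rw [hsdef, Matrix.star_dotProduct]
    have h3 : ((‖u - v‖ : ℝ) : ℂ) ^ 2 = ((2 - 2 * s.re : ℝ) : ℂ) := by
      rw [← hENuv, ← EN_sq, star_sub, sub_dotProduct, dotProduct_sub,
        dotProduct_sub, hu1, hv1, ← hsdef, hvu]
      have : s + star s = ((2 * s.re : ℝ) : ℂ) := by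
        rw [RCLike.star_def]; exact_mod_cast Complex.add_conj s
      push_cast at this ⊢
      linear_combination -this
    exact_mod_cast h3
  calc EN (X - Y) = Real.sqrt (EN (X - Y) ^ 2) := (Real.sqrt_sq (EN_nonneg _)).symm
    _ = Real.sqrt (2 - 2 * (s ^ k).re) := by rw [hEXY2]
    _ ≤ k * Real.sqrt (2 - 2 * s.re) := chord_pow s hs1 k
    _ = (k : ℝ) * ‖u - v‖ := by rw [← huv2, Real.sqrt_sq (norm_nonneg _)]
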